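/- Let S be a standard l-symbol satisfying (♥) such that all rows below row c are empty-partition rows (β^i_j = j for i > c), let x be the smallest integer with x ∈ β^c and x−1 ∉ β^c, let c' be minimal with x ∈ β^{c'}, and assume some row contains both x and x−1, with d (resp. d') maximal (resp. minimal) such that x−1 ∈ β^d (resp. β^{d'}). Then the symbol S' obtained from S by replacing the entry x by x−1 in exactly those rows i with 1 ≤ i < d' or d < i ≤ c is again a standard symbol satisfying (♥), and has strictly smaller size than S. -/

import Mathlib

/-- `β` is a β-number sequence of charge `s`: strictly increasing for indices `≤ s`,
and equal to the identity for sufficiently small indices. -/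
def RowOK (s : ℤ) (β : ℤ → ℤ) : Prop :=
  (∀ j : ℤ, j ≤ s → β (j - 1) < β j) ∧ ∃ N : ℤ, ∀ j : ℤ, j ≤ N → β j = j

/-- The size of a row of charge `s`: `∑_{j ≤ s} (β_j - j)`. -/
noncomputable def rowSize (s : ℤ) (β : ℤ → ℤ) : ℕ :=
  ∑' k : ℕ, (β (s - k) - (s - k)).toNat

/-- The size of an `l`-symbol (rows indexed by `1,…,l`, row `i` of charge `v i`). -/
noncomputable def symSize (l : ℕ) (v : ℕ → ℤ) (β : ℕ → ℤ → ℤ) : ℕ :=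
  ∑ i ∈ Finset.Icc 1 l, rowSize (v i) (β i)

/-- A symbol is standard if `β^i_j ≤ β^{i+1}_j` for all relevant `i`, `j`. -/
def Standard (l : ℕ) (v : ℕ → ℤ) (β : ℕ → ℤ → ℤ) : Prop :=
  ∀ i : ℕ, 1 ≤ i → i < l → ∀ j : ℤ, j ≤ v (i + 1) → β i j ≤ β (i + 1) j

/-- The set of entries of row `i` of a symbol. -/
def Row (v : ℕ → ℤ) (β : ℕ → ℤ → ℤ) (i : ℕ) : Set ℤ := {x | ∃ j ≤ v i, β i j = x}

/-- `Ψ : B2 → B1` is the Leclerc–Miyachi greedy injection: each entry `y` of `B2`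
(scanned in increasing order) is matched to the largest entry of `B1` not exceeding `y`
which has not been used for a smaller entry of `B2`. -/
def IsLMset (B1 B2 : Set ℤ) (Ψ : ℤ → ℤ) : Prop :=
  ∀ y ∈ B2, IsGreatest {z | z ∈ B1 ∧ z ≤ y ∧ ∀ y' ∈ B2, y' < y → Ψ y' ≠ z} (Ψ y)

/-- Condition (♥): for all `i < j < k`, the Leclerc–Miyachi injections of the symbol
satisfy `ψ_{k,i} = ψ_{j,i} ∘ ψ_{k,j}` on the entries of row `k`. -/
def Heart (l : ℕ) (v : ℕ → ℤ) (β : ℕ → ℤ → ℤ) : Prop :=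
  ∀ i j k, 1 ≤ i → i < j → j < k → k ≤ l →
    ∀ ψki ψji ψkj : ℤ → ℤ,
      IsLMset (Row v β i) (Row v β k) ψki →
      IsLMset (Row v β i) (Row v β j) ψji →
      IsLMset (Row v β j) (Row v β k) ψkj →
      ∀ x ∈ Row v β k, ψki x = ψji (ψkj x)

namespace HP

/-! ### Section 1 : basic RowOK facts -/

lemma rowOK_mono {s : ℤ} {β : ℤ → ℤ} (h : RowOK s β) :
    ∀ j1 j2 : ℤ, j1 < j2 → j2 ≤ s → β j1 < β j2 := by
  intro j1 j2 hlt hle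
  have key : ∀ j2 : ℤ, j1 + 1 ≤ j2 → j2 ≤ s → β j1 < β j2 := by
    intro j2 h2
    refine Int.le_induction (motive := fun n _ => n ≤ s → β j1 < β n) ?_ ?_ j2 h2
    · intro hs
      have := h.1 (j1 + 1) hs
      simpa using this
    · intro n hn ih hns
      have h1 := ih (by omega)
      have h2 := h.1 (n + 1) hns
      simp only [add_sub_cancel_right] at h2
      omega
  exact key j2 (by omega) hle

lemma rowOK_ge {s : ℤ} {β : ℤ → ℤ} (h : RowOK s β) :
    ∀ j : ℤ, j ≤ s → j ≤ β j := by
  obtain ⟨N, hN⟩ := h.2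
  intro j hj
  by_cases hjN : j ≤ N
  · rw [hN j hjN]
  · have key : ∀ j : ℤ, N ≤ j → j ≤ s → j ≤ β j := by
      intro j hNj
      refine Int.le_induction (motive := fun n _ => n ≤ s → n ≤ β n) ?_ ?_ j hNj
      · intro _; rw [hN N le_rfl]
      · intro n hn ih hns
        have h1 := ih (by omega)
        have h2 := h.1 (n + 1) hns
        simp only [add_sub_cancel_right] at h2
        omega
    exact key j (by omega) hj

lemma rowOK_reflect {s : ℤ} {β : ℤ → ℤ} (h : RowOK s β) {j1 j2 : ℤ}
    (h1 : j1 ≤ s) (h2 : j2 ≤ s) (hle : β j1 ≤ β j2) : j1 ≤ j2 := by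
  by_contra hc
  exact absurd (rowOK_mono h j2 j1 (by omega) h1) (by omega)

lemma rowOK_id_below {s : ℤ} {β : ℤ → ℤ} (h : RowOK s β) {j : ℤ}
    (hj : j ≤ s) (hid : β j = j) : ∀ j' ≤ j, β j' = j' := by
  have key : ∀ n : ℕ, β (j - n) = j - n := by
    intro n
    induction n with
    | zero => simpa using hid
    | succ n ih =>
      have hlt := h.1 (j - n) (by omega)
      have hge := rowOK_ge h (j - n - 1) (by omega)
      have : (j : ℤ) - (n + 1 : ℕ) = j - n - 1 := by push_cast; ring
      rw [this]
      omega
  intro j' hj'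
  have : j' = j - ((j - j').toNat : ℤ) := by omega
  rw [this]; exact key _

/-! ### Section 2 : basic LM facts -/

lemma lm_le {A B : Set ℤ} {Ψ : ℤ → ℤ} (h : IsLMset A B Ψ) {y : ℤ} (hy : y ∈ B) :
    Ψ y ≤ y := (h y hy).1.2.1

lemma lm_memA {A B : Set ℤ} {Ψ : ℤ → ℤ} (h : IsLMset A B Ψ) {y : ℤ} (hy : y ∈ B) :
    Ψ y ∈ A := (h y hy).1.1

lemma lm_ne {A B : Set ℤ} {Ψ : ℤ → ℤ} (h : IsLMset A B Ψ) {y y' : ℤ} (hy : y ∈ B)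
    (hy' : y' ∈ B) (hlt : y' < y) : Ψ y' ≠ Ψ y := (h y hy).1.2.2 y' hy' hlt

lemma lm_id {A B : Set ℤ} {Ψ : ℤ → ℤ} (h : IsLMset A B Ψ) {y : ℤ} (hyA : y ∈ A)
    (hyB : y ∈ B) : Ψ y = y := by
  refine le_antisymm (lm_le h hyB) ((h y hyB).2 ⟨hyA, le_rfl, fun y' hy' hlt => ?_⟩)
  exact ne_of_lt (lt_of_le_of_lt (lm_le h hy') hlt)

/-! ### Section 3 : the greedy construction -/

open Classical in
noncomputable def greedy (A B : Set ℤ) (m : ℤ) (y : ℤ) : ℤ :=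
  if hy : y ≤ m then y
  else if h : ∃ g, IsGreatest {z | z ∈ A ∧ z ≤ y ∧ ∀ y' ∈ B, y' < y →
      (if _h' : m < y' ∧ y' < y then greedy A B m y' else y') ≠ z} g
    then h.choose else y
termination_by (y - m).toNat
decreasing_by all_goals omega

lemma greedy_base (A B : Set ℤ) (m : ℤ) {y : ℤ} (hy : y ≤ m) : greedy A B m y = y := by
  rw [greedy]; simp [hy]

lemma greedy_le (A B : Set ℤ) (m : ℤ) (y : ℤ) : greedy A B m y ≤ y := by
  rw [greedy]
  split_ifs with hy h
  · exact le_rfl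
  · exact h.choose_spec.1.2.1
  · exact le_rfl

lemma greedy_set_eq (A B : Set ℤ) (m : ℤ) {y : ℤ} :
    {z | z ∈ A ∧ z ≤ y ∧ ∀ y' ∈ B, y' < y →
      (if _h' : m < y' ∧ y' < y then greedy A B m y' else y') ≠ z}
    = {z | z ∈ A ∧ z ≤ y ∧ ∀ y' ∈ B, y' < y → greedy A B m y' ≠ z} := by
  ext z
  simp only [Set.mem_setOf_eq]
  constructor <;> rintro ⟨h1, h2, h3⟩ <;> refine ⟨h1, h2, fun y' hy' hlt => ?_⟩ <;>
    have h4 := h3 y' hy' hlt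
  · by_cases hc : m < y' ∧ y' < y
    · simpa [hc] using h4
    · have hm : y' ≤ m := by omega
      rw [greedy_base A B m hm]
      simpa [hc] using h4
  · by_cases hc : m < y' ∧ y' < y
    · simpa [hc] using h4
    · have hm : y' ≤ m := by omega
      simp only [hc, dite_false]
      rw [greedy_base A B m hm] at h4
      exact h4

open Classical in
lemma greedy_isGreatest (A B : Set ℤ) (m : ℤ) {y : ℤ} (hy : ¬ y ≤ m)
    (hex : ∃ g, IsGreatest {z | z ∈ A ∧ z ≤ y ∧ ∀ y' ∈ B, y' < y →
      greedy A B m y' ≠ z} g) :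
    IsGreatest {z | z ∈ A ∧ z ≤ y ∧ ∀ y' ∈ B, y' < y → greedy A B m y' ≠ z}
      (greedy A B m y) := by
  have hex' : ∃ g, IsGreatest {z | z ∈ A ∧ z ≤ y ∧ ∀ y' ∈ B, y' < y →
      (if _h' : m < y' ∧ y' < y then greedy A B m y' else y') ≠ z} g := by
    rwa [greedy_set_eq]
  have e : greedy A B m y = hex'.choose := by
    rw [greedy, dif_neg hy, dif_pos hex']
  rw [e]
  have hspec := hex'.choose_spec
  have hiff := Set.ext_iff.mp (greedy_set_eq A B m (y := y))
  exact ⟨(hiff _).mp hspec.1, fun z hz => hspec.2 ((hiff z).mpr hz)⟩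


/-! ### Section 4 : symbol-level helpers and existence of LM maps -/

section Symbol

variable {l : ℕ} {v : ℕ → ℤ} {β : ℕ → ℤ → ℤ}

lemma v_anti (hv : ∀ i, 1 ≤ i → i < l → v (i + 1) ≤ v i) :
    ∀ a b : ℕ, 1 ≤ a → a ≤ b → b ≤ l → v b ≤ v a := by
  intro a b h1 hab hbl
  induction b with
  | zero => omega
  | succ n ih =>
    rcases Nat.eq_or_lt_of_le hab with h | h
    · rw [h]
    · have hvn := hv n (by omega) (by omega)
      have := ih (by omega) (by omega)
      omega

lemma std_chain (hv : ∀ i, 1 ≤ i → i < l → v (i + 1) ≤ v i) (hstd : Standard l v β) :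
    ∀ a b : ℕ, 1 ≤ a → a ≤ b → b ≤ l → ∀ j : ℤ, j ≤ v b → β a j ≤ β b j := by
  intro a b h1 hab hbl
  induction b with
  | zero => omega
  | succ n ih =>
    intro j hj
    rcases Nat.eq_or_lt_of_le hab with h | h
    · rw [h]
    · have h2 := hstd n (by omega) (by omega) j hj
      have h3 := ih (by omega) (by omega) j
        (le_trans hj (hv n (by omega) (by omega)))
      omega

lemma exists_lm (hv : ∀ i, 1 ≤ i → i < l → v (i + 1) ≤ v i)
    (hrows : ∀ i, 1 ≤ i → i ≤ l → RowOK (v i) (β i)) (hstd : Standard l v β)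
    {a b : ℕ} (ha : 1 ≤ a) (hab : a < b) (hbl : b ≤ l) :
    ∃ Ψ, IsLMset (Row v β a) (Row v β b) Ψ := by
  classical
  have hal : a ≤ l := by omega
  have hb1 : 1 ≤ b := by omega
  have hOKa := hrows a ha hal
  have hOKb := hrows b hb1 hbl
  have hvba : v b ≤ v a := v_anti hv a b ha (by omega) hbl
  obtain ⟨Na, hNa⟩ := hOKa.2
  obtain ⟨Nb, hNb⟩ := hOKb.2
  set m := min (min Na Nb) (v b) with hm
  refine ⟨greedy (Row v β a) (Row v β b) m, ?_⟩
  intro y hy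
  by_cases hym : y ≤ m
  · rw [greedy_base _ _ _ hym]
    constructor
    · refine ⟨⟨y, by omega, hNa y (by omega)⟩, le_rfl, fun y' hy' hlt => ?_⟩
      have := greedy_le (Row v β a) (Row v β b) m y'
      omega
    · intro z hz; exact hz.2.1
  · refine greedy_isGreatest _ _ _ hym ?_
    obtain ⟨j, hjv, hjy⟩ := hy
    have hmj : m < j := by
      by_contra hc
      push_neg at hc
      have : β b j = j := hNb j (by omega)
      omega
    have hjy' : m < y := by omega
    set F := (Finset.Ioc m y).filter (· ∈ Row v β a) with hF
    set G := (Finset.Ioo m y).filter (· ∈ Row v β b) with hG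
    set U := G.image (greedy (Row v β a) (Row v β b) m) with hU
    have hcardF : (j - m).toNat ≤ F.card := by
      have hinj := Finset.card_le_card_of_injOn (fun j' => β a j')
        (s := Finset.Ioc m j) (t := F) ?_ ?_
      · rwa [Int.card_Ioc] at hinj
      · intro j' hj'
        rw [Finset.mem_coe, Finset.mem_Ioc] at hj'
        have hjva : j' ≤ v a := by omega
        have hge := rowOK_ge hOKa j' hjva
        have hmono : β a j' ≤ β a j := by
          rcases eq_or_lt_of_le hj'.2 with h | h
          · rw [h]
          · exact le_of_lt (rowOK_mono hOKa j' j h (by omega))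
        have hchain : β a j ≤ β b j := std_chain hv hstd a b ha (by omega) hbl j hjv
        rw [Finset.mem_coe, Finset.mem_filter, Finset.mem_Ioc]
        exact ⟨⟨show m < β a j' by omega, show β a j' ≤ y by omega⟩, ⟨j', hjva, rfl⟩⟩
      · intro j1 hj1 j2 hj2 heq
        simp only [Finset.coe_Ioc, Set.mem_Ioc] at hj1 hj2
        have := rowOK_reflect hOKa (by omega : j1 ≤ v a) (by omega : j2 ≤ v a) (le_of_eq heq)
        have := rowOK_reflect hOKa (by omega : j2 ≤ v a) (by omega : j1 ≤ v a) (le_of_eq heq.symm)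
        omega
    have hexmem : ∀ y' ∈ G, ∃ j'', m < j'' ∧ j'' < j ∧ β b j'' = y' := by
      intro y' hy'
      rw [hG, Finset.mem_filter, Finset.mem_Ioo] at hy'
      obtain ⟨⟨hy1, hy2⟩, j', hj'v, hj'⟩ := hy'
      refine ⟨j', ?_, ?_, hj'⟩
      · by_contra hc
        push_neg at hc
        have : β b j' = j' := hNb j' (by omega)
        omega
      · by_contra hc
        push_neg at hc
        have : β b j ≤ β b j' := by
          rcases eq_or_lt_of_le hc with h | h
          · rw [h]
          · exact le_of_lt (rowOK_mono hOKb j j' h hj'v)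
        omega
    have hcardG : G.card ≤ (j - 1 - m).toNat := by
      classical
      set idx : ℤ → ℤ := fun y' => if h : ∃ j'', m < j'' ∧ j'' < j ∧ β b j'' = y' then h.choose else 0
        with hidx
      have hidxval : ∀ y' ∈ G, m < idx y' ∧ idx y' < j ∧ β b (idx y') = y' := by
        intro y' hy'
        have hex := hexmem y' hy'
        rw [hidx]
        simp only [hex, dite_true]
        exact hex.choose_spec
      have hinj := Finset.card_le_card_of_injOn idx (s := G) (t := Finset.Ioo m j) ?_ ?_
      · rwa [Int.card_Ioo, show j - m - 1 = j - 1 - m by ring] at hinj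
      · intro y' hy'
        have := hidxval y' hy'
        rw [Finset.mem_coe, Finset.mem_Ioo]
        exact ⟨this.1, this.2.1⟩
      · intro y1 hy1 y2 hy2 heq
        have h1 := hidxval y1 hy1
        have h2 := hidxval y2 hy2
        rw [← h1.2.2, ← h2.2.2, heq]
    have hcardU : U.card ≤ G.card := Finset.card_image_le
    have hnotsub : ¬ F ⊆ U := by
      intro hsub
      have := Finset.card_le_card hsub
      omega
    obtain ⟨z, hzF, hzU⟩ := Finset.not_subset.mp hnotsub
    rw [hF, Finset.mem_filter, Finset.mem_Ioc] at hzF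
    have hinh : z ∈ Row v β a ∧ z ≤ y ∧
        ∀ y' ∈ Row v β b, y' < y → greedy (Row v β a) (Row v β b) m y' ≠ z := by
      refine ⟨hzF.2, hzF.1.2, fun y' hy' hlt => ?_⟩
      by_cases hy'm : y' ≤ m
      · have := greedy_base (Row v β a) (Row v β b) m hy'm
        omega
      · intro heq
        apply hzU
        rw [hU]
        refine Finset.mem_image.mpr ⟨y', ?_, heq⟩
        rw [hG, Finset.mem_filter, Finset.mem_Ioo]
        exact ⟨⟨by omega, hlt⟩, hy'⟩
    obtain ⟨g, hg, hub⟩ := Int.exists_greatest_of_bdd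
      (P := fun z0 => z0 ∈ Row v β a ∧ z0 ≤ y ∧
        ∀ y' ∈ Row v β b, y' < y → greedy (Row v β a) (Row v β b) m y' ≠ z0)
      ⟨y, fun z0 hz0 => hz0.2.1⟩ ⟨z, hinh⟩
    exact ⟨g, hg, fun z0 hz0 => hub z0 hz0⟩

end Symbol


/-! ### Section 5 : structural lemmas about the symbol -/

section Struct

variable {l : ℕ} {v : ℕ → ℤ} {β : ℕ → ℤ → ℤ} {c : ℕ} {x : ℤ}

lemma d_lt_c (hv : ∀ i, 1 ≤ i → i < l → v (i + 1) ≤ v i)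
    (hrows : ∀ i, 1 ≤ i → i ≤ l → RowOK (v i) (β i)) (hstd : Standard l v β)
    (hc1 : 1 ≤ c) (hcl : c ≤ l)
    (hbelow : ∀ i, c < i → i ≤ l → ∀ j : ℤ, j ≤ v i → β i j = j)
    (hx1c : (x - 1) ∉ Row v β c) {d : ℕ} (hd1 : 1 ≤ d) (hdl : d ≤ l)
    (hxd : (x - 1) ∈ Row v β d) : d < c := by
  by_contra hcon
  push_neg at hcon
  have hne : d ≠ c := fun h => hx1c (h ▸ hxd)
  have hclt : c < d := by omega
  obtain ⟨j, hjv, hj⟩ := hxd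
  have hjj : β d j = j := hbelow d hclt hdl j hjv
  have hx1vd : x - 1 ≤ v d := by omega
  have hvd : v d ≤ v (c + 1) := v_anti hv (c + 1) d (by omega) (by omega) hdl
  have hvc1 : v (c + 1) ≤ v c := hv c hc1 (by omega)
  have h1 : β c (x - 1) ≤ β (c + 1) (x - 1) := hstd c hc1 (by omega) (x - 1) (by omega)
  have h2 : β (c + 1) (x - 1) = x - 1 := hbelow (c + 1) (by omega) (by omega) (x - 1) (by omega)
  have h3 : x - 1 ≤ β c (x - 1) := rowOK_ge (hrows c hc1 hcl) (x - 1) (by omega)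
  exact hx1c ⟨x - 1, by omega, by omega⟩

lemma rows_above (hrows : ∀ i, 1 ≤ i → i ≤ l → RowOK (v i) (β i))
    (hcl : c ≤ l)
    (hbelow : ∀ i, c < i → i ≤ l → ∀ j : ℤ, j ≤ v i → β i j = j)
    {d : ℕ} (hdc : d < c)
    (hd4 : ∀ i, d < i → i ≤ l → (x - 1) ∉ Row v β i) :
    ∀ a, c < a → a ≤ l → ∀ y ∈ Row v β a, y ≤ x - 2 := by
  intro a hca hal y hy
  obtain ⟨j, hjv, hj⟩ := hy
  have hjj : β a j = j := hbelow a hca hal j hjv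
  have hva : v a ≤ x - 2 := by
    by_contra hcon
    push_neg at hcon
    exact hd4 a (by omega) hal ⟨x - 1, by omega, hbelow a hca hal (x - 1) (by omega)⟩
  omega

/-- the structure of row `c` around `x`. -/
lemma rowc_struct (hrows : ∀ i, 1 ≤ i → i ≤ l → RowOK (v i) (β i))
    (hc1 : 1 ≤ c) (hcl : c ≤ l)
    (hxc : x ∈ Row v β c) (hx1c : (x - 1) ∉ Row v β c)
    (hxmin : ∀ y : ℤ, y ∈ Row v β c → (y - 1) ∉ Row v β c → x ≤ y) :
    ∃ j0 : ℤ, j0 ≤ v c ∧ β c j0 = x ∧ j0 + 1 ≤ x ∧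
      (∀ j ≤ j0 - 1, β c j = j) ∧ (∀ y ∈ Row v β c, y < x → y ≤ j0 - 1) := by
  classical
  have hOKc := hrows c hc1 hcl
  obtain ⟨j0, hj0v, hj0⟩ := hxc
  have hdcl : ∀ y, y ∈ Row v β c → y < x → ∀ n : ℕ, (y - n) ∈ Row v β c := by
    intro y hy hlt n
    induction n with
    | zero => simpa using hy
    | succ n ih =>
      have hmem := ih
      have hmem2 : (y - n) - 1 ∈ Row v β c := by
        by_contra h'
        have := hxmin (y - n) hmem h'
        omega
      have : (y : ℤ) - (n + 1 : ℕ) = y - n - 1 := by push_cast; ring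
      rw [this]
      exact hmem2
  set b := β c (j0 - 1) with hb
  have hbge : j0 - 1 ≤ b := rowOK_ge hOKc (j0 - 1) (by omega)
  have hblt : b < x := hj0 ▸ rowOK_mono hOKc (j0 - 1) j0 (by omega) hj0v
  have hbmem : b ∈ Row v β c := ⟨j0 - 1, by omega, rfl⟩
  have hbne : b ≠ x - 1 := fun h => hx1c (h ▸ hbmem)
  have hble : b ≤ x - 2 := by omega
  have hxj0 : j0 + 1 ≤ x := by
    rcases eq_or_lt_of_le (rowOK_ge hOKc j0 hj0v) with h | h
    · exfalso
      have hid := rowOK_id_below hOKc hj0v h.symm (j0 - 1) (by omega)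
      rw [hid] at hb
      omega
    · omega
  obtain ⟨Nc, hNc⟩ := hOKc.2
  set m := min Nc (j0 - 1) with hm
  have hbj0 : b = j0 - 1 := by
    by_contra hcon
    have hbgt : j0 ≤ b := by omega
    -- counting: inject Icc (m+1) b into Icc (m+1) (j0-1)
    set idx : ℤ → ℤ := fun y' => if h : ∃ j', m < j' ∧ j' ≤ j0 - 1 ∧ β c j' = y' then h.choose
      else 0 with hidx
    have hidxval : ∀ y' ∈ Finset.Icc (m + 1) b,
        m < idx y' ∧ idx y' ≤ j0 - 1 ∧ β c (idx y') = y' := by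
      intro y' hy'
      rw [Finset.mem_Icc] at hy'
      have hymem : y' ∈ Row v β c := by
        have := hdcl b hbmem hblt ((b - y').toNat)
        have he : b - ((b - y').toNat : ℤ) = y' := by omega
        rwa [he] at this
      obtain ⟨j', hj'v, hj'⟩ := hymem
      have hex : ∃ j'', m < j'' ∧ j'' ≤ j0 - 1 ∧ β c j'' = y' := by
        refine ⟨j', ?_, ?_, hj'⟩
        · by_contra hc2
          push_neg at hc2
          have : β c j' = j' := hNc j' (by omega)
          omega
        · by_contra hc2
          push_neg at hc2
          have h2 : β c j0 ≤ β c j' := by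
            rcases eq_or_lt_of_le (show j0 ≤ j' by omega) with h | h
            · rw [h]
            · exact le_of_lt (rowOK_mono hOKc j0 j' h hj'v)
          omega
      rw [hidx]
      simp only [hex, dite_true]
      exact hex.choose_spec
    have hinj := Finset.card_le_card_of_injOn idx (s := Finset.Icc (m + 1) b)
      (t := Finset.Icc (m + 1) (j0 - 1)) ?_ ?_
    · rw [Int.card_Icc, Int.card_Icc] at hinj
      omega
    · intro y' hy'
      have := hidxval y' hy'
      rw [Finset.mem_coe, Finset.mem_Icc]
      omega
    · intro y1 hy1 y2 hy2 heq
      have h1 := hidxval y1 hy1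
      have h2 := hidxval y2 hy2
      rw [← h1.2.2, ← h2.2.2, heq]
  have hidbelow : ∀ j ≤ j0 - 1, β c j = j :=
    rowOK_id_below hOKc (by omega) (hbj0 ▸ hb.symm)
  refine ⟨j0, hj0v, hj0, hxj0, hidbelow, ?_⟩
  intro y hy hylt
  obtain ⟨j, hjv, hj⟩ := hy
  have hjlt : j < j0 := by
    by_contra hc2
    push_neg at hc2
    have h2 : β c j0 ≤ β c j := by
      rcases eq_or_lt_of_le (show j0 ≤ j by omega) with h | h
      · rw [h]
      · exact le_of_lt (rowOK_mono hOKc j0 j h hjv)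
    omega
  have := hidbelow j (by omega)
  omega

end Struct


/-! ### Section 6 : membership intervals via (♥) -/

section Intervals

variable {l : ℕ} {v : ℕ → ℤ} {β : ℕ → ℤ → ℤ} {c : ℕ} {x : ℤ}

/-- `x - 1` belongs to every row between `d'` and `d`. -/
lemma x1_interval (hv : ∀ i, 1 ≤ i → i < l → v (i + 1) ≤ v i)
    (hrows : ∀ i, 1 ≤ i → i ≤ l → RowOK (v i) (β i)) (hstd : Standard l v β)
    (hheart : Heart l v β) {d d' : ℕ} (hd'1 : 1 ≤ d') (hdl : d ≤ l)
    (hxd : (x - 1) ∈ Row v β d) (hxd' : (x - 1) ∈ Row v β d') :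
    ∀ a, d' ≤ a → a ≤ d → (x - 1) ∈ Row v β a := by
  intro a ha1 ha2
  rcases eq_or_lt_of_le ha1 with h | hlt1
  · rwa [← h]
  rcases eq_or_lt_of_le ha2 with h | hlt2
  · rwa [h]
  by_contra hna
  obtain ⟨ψdd', hdd'⟩ := exists_lm hv hrows hstd hd'1 (show d' < d by omega) hdl
  obtain ⟨ψad', had'⟩ := exists_lm hv hrows hstd hd'1 hlt1 (by omega)
  obtain ⟨ψda, hda⟩ := exists_lm hv hrows hstd (by omega : 1 ≤ a) hlt2 hdl
  have hcomp := hheart d' a d hd'1 hlt1 hlt2 hdl ψdd' ψad' ψda hdd' had' hda (x - 1) hxd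
  have hLHS : ψdd' (x - 1) = x - 1 := lm_id hdd' hxd' hxd
  have hw1 : ψda (x - 1) ∈ Row v β a := lm_memA hda hxd
  have hw2 : ψda (x - 1) ≤ x - 1 := lm_le hda hxd
  have hw3 : ψda (x - 1) ≠ x - 1 := fun h => hna (h ▸ hw1)
  have hw4 := lm_le had' hw1
  omega

/-- `x` belongs to every row from `1` to `c`. -/
lemma x_all (hv : ∀ i, 1 ≤ i → i < l → v (i + 1) ≤ v i)
    (hrows : ∀ i, 1 ≤ i → i ≤ l → RowOK (v i) (β i)) (hstd : Standard l v β)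
    (hheart : Heart l v β) (hc1 : 1 ≤ c) (hcl : c ≤ l)
    (hxc : x ∈ Row v β c)
    {e : ℕ} (he1 : 1 ≤ e) (hec : e < c) (hxe : x ∈ Row v β e) (hx1e : (x - 1) ∈ Row v β e)
    {j0 : ℤ} (hj0v : j0 ≤ v c) (hj0x : β c j0 = x) (hxj0 : j0 + 1 ≤ x)
    (hIdAll : ∀ a, 1 ≤ a → a ≤ c → ∀ j ≤ j0 - 1, β a j = j)
    (hRowcSmall : ∀ y ∈ Row v β c, y < x → y ≤ j0 - 1) :
    ∀ a, 1 ≤ a → a ≤ c → x ∈ Row v β a := by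
  intro a ha1 ha2
  rcases eq_or_lt_of_le ha2 with h | hac
  · rwa [h]
  by_contra hna
  have hsmall : ∀ a', 1 ≤ a' → a' ≤ c → ∀ z : ℤ, z ≤ j0 - 1 → z ∈ Row v β a' := by
    intro a' h1 h2 z hz
    have hva : v c ≤ v a' := v_anti hv a' c h1 h2 hcl
    exact ⟨z, by omega, hIdAll a' h1 h2 z hz⟩
  have hane : a ≠ e := fun h => hna (h ▸ hxe)
  rcases Nat.lt_or_ge e a with hea | hae
  · -- e < a < c : triple (e, a, c)
    obtain ⟨ψce, hce⟩ := exists_lm hv hrows hstd he1 (show e < c by omega) hcl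
    obtain ⟨ψae, hae'⟩ := exists_lm hv hrows hstd he1 hea (by omega)
    obtain ⟨ψca, hca⟩ := exists_lm hv hrows hstd ha1 hac hcl
    have hcomp := hheart e a c he1 hea hac hcl ψce ψae ψca hce hae' hca x hxc
    have hLHS : ψce x = x := lm_id hce hxe hxc
    have hw1 : ψca x ∈ Row v β a := lm_memA hca hxc
    have hw2 : ψca x ≤ x := lm_le hca hxc
    have hw3 : ψca x ≠ x := fun h => hna (h ▸ hw1)
    have hw4 := lm_le hae' hw1
    omega
  · -- a < e : triple (a, e, c)
    have haelt : a < e := by omega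
    obtain ⟨ψca, hca⟩ := exists_lm hv hrows hstd ha1 hac hcl
    obtain ⟨ψea, hea'⟩ := exists_lm hv hrows hstd ha1 haelt (by omega)
    obtain ⟨ψce, hce⟩ := exists_lm hv hrows hstd he1 (show e < c by omega) hcl
    have hcomp := hheart a e c ha1 haelt (by omega) hcl ψca ψea ψce hca hea' hce x hxc
    -- the greatest element M of Row a ∩ [j0, x]
    have hz1 : ψea (x - 1) ∈ Row v β a ∧ j0 ≤ ψea (x - 1) ∧ ψea (x - 1) ≤ x := by
      refine ⟨lm_memA hea' hx1e, ?_, by have := lm_le hea' hx1e; omega⟩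
      by_contra hcon
      push_neg at hcon
      have hz1e : ψea (x - 1) ∈ Row v β e :=
        hsmall e he1 (by omega) _ (by omega)
      have hz1a : ψea (x - 1) ∈ Row v β a := lm_memA hea' hx1e
      have hid : ψea (ψea (x - 1)) = ψea (x - 1) := lm_id hea' hz1a hz1e
      exact lm_ne hea' hx1e hz1e (by omega) hid
    obtain ⟨M, hM, hMub⟩ := Int.exists_greatest_of_bdd
      (P := fun z => z ∈ Row v β a ∧ j0 ≤ z ∧ z ≤ x)
      ⟨x, fun z hz => hz.2.2⟩ ⟨ψea (x - 1), hz1⟩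
    have hMne : M ≠ x := fun h => hna (h ▸ hM.1)
    have hMx1 : M ≤ x - 1 := by have := hM.2.2; omega
    -- any LM value at x lands in [j0, x]
    have hinP : ∀ (b : ℕ) (ψ : ℤ → ℤ), 1 ≤ b → b ≤ c → IsLMset (Row v β a) (Row v β b) ψ →
        x ∈ Row v β b → ψ x ∈ Row v β a ∧ j0 ≤ ψ x ∧ ψ x ≤ x := by
      intro b ψ hb1 hb2 hψ hxb
      refine ⟨lm_memA hψ hxb, ?_, lm_le hψ hxb⟩
      by_contra hcon
      push_neg at hcon
      have hzb : ψ x ∈ Row v β b := hsmall b hb1 hb2 _ (by omega)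
      have hza : ψ x ∈ Row v β a := lm_memA hψ hxb
      have hid : ψ (ψ x) = ψ x := lm_id hψ hza hzb
      exact lm_ne hψ hxb hzb (by omega) hid
    -- ψca x = M
    have hcaM : ψca x = M := by
      have hP := hinP c ψca hc1 le_rfl hca hxc
      have hGr := hca x hxc
      have hMS : M ∈ {z | z ∈ Row v β a ∧ z ≤ x ∧ ∀ y' ∈ Row v β c, y' < x → ψca y' ≠ z} := by
        refine ⟨hM.1, hM.2.2, fun y' hy' hlt => ?_⟩
        have hy's : y' ≤ j0 - 1 := hRowcSmall y' hy' hlt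
        have : ψca y' = y' := lm_id hca (hsmall a ha1 (by omega) y' hy's) hy'
        omega
      have h1 := hGr.2 hMS
      have h2 := hMub _ hP
      omega
    -- ψea x ∈ P and ψea x ≠ M
    have heaP := hinP e ψea he1 (by omega) hea' hxe
    have heaM : ψea x ≠ M := by
      intro heq
      have hMS : M ∈ {z | z ∈ Row v β a ∧ z ≤ x - 1 ∧
          ∀ y' ∈ Row v β e, y' < x - 1 → ψea y' ≠ z} := by
        refine ⟨hM.1, hMx1, fun y' hy' hlt => ?_⟩
        intro h
        exact lm_ne hea' hxe hy' (by omega) (h.trans heq.symm)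
      have h1 := (hea' (x - 1) hx1e).2 hMS
      have h2 := hMub _ hz1
      have h3 : ψea (x - 1) = M := by omega
      exact lm_ne hea' hxe hx1e (by omega) (h3.trans heq.symm)
    have hLHS : ψce x = x := lm_id hce hxe hxc
    rw [hLHS] at hcomp
    have h2 := hMub _ heaP
    omega

end Intervals


/-! ### Section 7 : transfer of LM maps under the replacement x ↦ x-1 -/

def sg (x z : ℤ) : ℤ := if z = x then x - 1 else z
def rh (x z : ℤ) : ℤ := if z = x - 1 then x else z
def tw (x z : ℤ) : ℤ := if z = x then x - 1 else if z = x - 1 then x else z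

lemma sg_le (x z : ℤ) : sg x z ≤ z := by unfold sg; split_ifs <;> omega
lemma rh_ge (x z : ℤ) : z ≤ rh x z := by unfold rh; split_ifs <;> omega
lemma tw_tw (x z : ℤ) : tw x (tw x z) = z := by unfold tw; split_ifs <;> omega
lemma rh_inj {x a b : ℤ} (ha : a ≠ x) (hb : b ≠ x) (h : rh x a = rh x b) : a = b := by
  unfold rh at h; split_ifs at h <;> omega
lemma sg_ne (x z : ℤ) (h : z ≠ x) : sg x z = z := if_neg h
lemma rh_ne (x z : ℤ) (h : z ≠ x - 1) : rh x z = z := if_neg h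
lemma tw_ne (x z : ℤ) (h1 : z ≠ x) (h2 : z ≠ x - 1) : tw x z = z := by
  unfold tw; rw [if_neg h1, if_neg h2]
lemma tw_le {x z y : ℤ} (hx : x ≤ y) (hz : z ≤ y) : tw x z ≤ y := by
  unfold tw; split_ifs <;> omega
lemma tw_le_rev {x a b : ℤ} (hax : a ≠ x) (h : tw x a ≤ b) : a ≤ tw x b := by
  unfold tw at *; split_ifs at * <;> omega

section Transfer

variable {x : ℤ} {A B : Set ℤ} {Ψ' : ℤ → ℤ}

lemma memA' {A : Set ℤ} {x z : ℤ} :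
    z ∈ insert (x - 1) (A \ {x}) ↔ (z = x - 1 ∨ (z ∈ A ∧ z ≠ x)) := by
  simp [Set.mem_insert_iff, Set.mem_diff]

/-- the τ-commutation for LM maps between two rows containing both x-1 and x. -/
lemma lm_tw (h : IsLMset A B Ψ') (hAx : x ∈ A) (hA1 : x - 1 ∈ A) (hBx : x ∈ B)
    (hB1 : x - 1 ∈ B) {y : ℤ} (hy : y ∈ B) : Ψ' (tw x y) = tw x (Ψ' y) := by
  by_cases h1 : y = x
  · rw [h1]
    simp [tw, lm_id h hA1 hB1, lm_id h hAx hBx]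
  by_cases h2 : y = x - 1
  · rw [h2]
    simp [tw, lm_id h hA1 hB1, lm_id h hAx hBx]
  · rw [tw_ne x y h1 h2]
    have hne1 : Ψ' y ≠ x ∧ Ψ' y ≠ x - 1 := by
      rcases lt_or_gt_of_ne h2 with hlt | hgt
    -- y < x - 1 or y > x - 1
      · have := lm_le h hy
        constructor <;> omega
      · have hyx : x < y := by
          rcases lt_or_gt_of_ne h1 with h' | h'
          · omega
          · exact h'
        have e1 : Ψ' (x - 1) = x - 1 := lm_id h hA1 hB1
        have e2 : Ψ' x = x := lm_id h hAx hBx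
        constructor
        · intro hc
          exact lm_ne h hy hBx hyx (by rw [e2, hc])
        · intro hc
          exact lm_ne h hy hB1 (by omega) (by rw [e1, hc])
    rw [tw_ne x _ hne1.1 hne1.2]

/-- Transfer (M,M) : both rows replace x by x-1. -/
lemma transfer_MM (hAx : x ∈ A) (hAx1 : x - 1 ∉ A) (hBx : x ∈ B) (hBx1 : x - 1 ∉ B)
    (hΨ : IsLMset (insert (x - 1) (A \ {x})) (insert (x - 1) (B \ {x})) Ψ') :
    IsLMset A B (fun y => rh x (Ψ' (sg x y))) := by
  have hΨ1 : Ψ' (x - 1) = x - 1 :=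
    lm_id hΨ (memA'.mpr (Or.inl rfl)) (memA'.mpr (Or.inl rfl))
  have hnex : ∀ w, w ∈ insert (x - 1) (B \ {x}) → Ψ' w ≠ x := by
    intro w hw
    rcases memA'.mp (lm_memA hΨ hw) with h | h
    · omega
    · exact h.2
  intro y hy
  have hyx1 : y ≠ x - 1 := fun h => hBx1 (h ▸ hy)
  rcases lt_trichotomy y x with hlt | heq | hgt
  · -- y ≤ x - 2
    have hy2 : y ≤ x - 2 := by omega
    have hyB' : y ∈ insert (x - 1) (B \ {x}) := memA'.mpr (Or.inr ⟨hy, by omega⟩)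
    have hsgy : sg x y = y := sg_ne x y (by omega)
    have hv' : Ψ' y ≤ y := lm_le hΨ hyB'
    have hrhy : rh x (Ψ' y) = Ψ' y := rh_ne x _ (by omega)
    have hGr := hΨ y hyB'
    constructor
    · refine ⟨?_, ?_, ?_⟩
      · show rh x (Ψ' (sg x y)) ∈ A
        rw [hsgy, hrhy]
        rcases memA'.mp (lm_memA hΨ hyB') with h | h
        · omega
        · exact h.1
      · show rh x (Ψ' (sg x y)) ≤ y
        rw [hsgy, hrhy]; exact hv'
      · intro y' hy'B hlt'
        show rh x (Ψ' (sg x y')) ≠ rh x (Ψ' (sg x y))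
        have hy'2 : y' ≤ x - 2 := by omega
        have hy'B' : y' ∈ insert (x - 1) (B \ {x}) := memA'.mpr (Or.inr ⟨hy'B, by omega⟩)
        have hsgy' : sg x y' = y' := sg_ne x y' (by omega)
        have hv'' : Ψ' y' ≤ y' := lm_le hΨ hy'B'
        rw [hsgy, hsgy', hrhy, rh_ne x _ (by omega)]
        exact lm_ne hΨ hyB' hy'B' hlt'
    · intro z hz
      obtain ⟨hzA, hzy, hzex⟩ := hz
      show z ≤ rh x (Ψ' (sg x y))
      rw [hsgy, hrhy]
      refine hGr.2 ⟨memA'.mpr (Or.inr ⟨hzA, by omega⟩), hzy, ?_⟩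
      intro w hwB' hwlt
      rcases memA'.mp hwB' with h | h
      · omega
      · have h5 : rh x (Ψ' (sg x w)) ≠ z := hzex w h.1 hwlt
        have hw2 : w ≤ x - 2 := by omega
        have hv'' : Ψ' w ≤ w := lm_le hΨ hwB'
        rw [sg_ne x w (by omega), rh_ne x _ (by omega)] at h5
        exact h5
  · -- y = x
    have hval : rh x (Ψ' (sg x y)) = x := by
      rw [heq]; simp [sg, rh, hΨ1]
    constructor
    · refine ⟨?_, ?_, ?_⟩
      · show rh x (Ψ' (sg x y)) ∈ A
        rw [hval]; exact hAx
      · show rh x (Ψ' (sg x y)) ≤ y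
        rw [hval]; omega
      · intro y' hy'B hlt'
        show rh x (Ψ' (sg x y')) ≠ rh x (Ψ' (sg x y))
        rw [hval]
        have h6 : y' ≠ x - 1 := fun h => hBx1 (h ▸ hy'B)
        have hy'2 : y' ≤ x - 2 := by omega
        have hy'B' : y' ∈ insert (x - 1) (B \ {x}) := memA'.mpr (Or.inr ⟨hy'B, by omega⟩)
        have hv'' : Ψ' y' ≤ y' := lm_le hΨ hy'B'
        rw [sg_ne x y' (by omega), rh_ne x _ (by omega)]
        omega
    · intro z hz
      show z ≤ rh x (Ψ' (sg x y))
      rw [hval]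
      have h7 := hz.2.1
      omega
  · -- y > x
    have hyB' : y ∈ insert (x - 1) (B \ {x}) := memA'.mpr (Or.inr ⟨hy, by omega⟩)
    have hsgy : sg x y = y := sg_ne x y (by omega)
    have hGr := hΨ y hyB'
    constructor
    · refine ⟨?_, ?_, ?_⟩
      · show rh x (Ψ' (sg x y)) ∈ A
        rw [hsgy]
        rcases memA'.mp (lm_memA hΨ hyB') with h | h
        · rw [h, rh, if_pos rfl]; exact hAx
        · rw [rh_ne x _ (fun hc => hAx1 (hc ▸ h.1))]; exact h.1
      · show rh x (Ψ' (sg x y)) ≤ y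
        rw [hsgy]
        have h1 : Ψ' y ≤ y := lm_le hΨ hyB'
        unfold rh; split_ifs <;> omega
      · intro y' hy'B hlt'
        show rh x (Ψ' (sg x y')) ≠ rh x (Ψ' (sg x y))
        rw [hsgy]
        have hsgB' : sg x y' ∈ insert (x - 1) (B \ {x}) := by
          by_cases hc : y' = x
          · rw [hc, sg, if_pos rfl]; exact memA'.mpr (Or.inl rfl)
          · rw [sg_ne x y' hc]; exact memA'.mpr (Or.inr ⟨hy'B, hc⟩)
        have hsglt : sg x y' < y := lt_of_le_of_lt (sg_le x y') hlt'
        intro hcon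
        exact lm_ne hΨ hyB' hsgB' hsglt
          (rh_inj (hnex _ hsgB') (hnex _ hyB') hcon)
    · intro z hz
      obtain ⟨hzA, hzy, hzex⟩ := hz
      show z ≤ rh x (Ψ' (sg x y))
      rw [hsgy]
      have hznex : z ≠ x := by
        have h5 : rh x (Ψ' (sg x x)) ≠ z := hzex x hBx hgt
        have hvx : rh x (Ψ' (sg x x)) = x := by
          simp [sg, rh, hΨ1]
        rw [hvx] at h5
        exact fun h => h5 h.symm
      have hzS' : z ≤ Ψ' y := by
        refine hGr.2 ⟨memA'.mpr (Or.inr ⟨hzA, hznex⟩), hzy, ?_⟩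
        intro w hwB' hwlt
        rcases memA'.mp hwB' with h | h
        · rw [h, hΨ1]
          exact fun hc => hAx1 (hc ▸ hzA)
        · have h5 : rh x (Ψ' (sg x w)) ≠ z := hzex w h.1 hwlt
          rw [sg_ne x w h.2] at h5
          by_cases hc : Ψ' w = x - 1
          · rw [hc]; exact fun hcc => hAx1 (hcc ▸ hzA)
          · rw [rh_ne x _ hc] at h5
            exact h5
      exact le_trans hzS' (rh_ge x _)

end Transfer


section Transfer2

variable {x : ℤ} {A B : Set ℤ} {Ψ' : ℤ → ℤ}

lemma tw_inj {x a b : ℤ} (h : tw x a = tw x b) : a = b := by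
  have := tw_tw x a
  rw [h, tw_tw] at this
  exact this.symm

/-- Transfer (M,B) : B1 replaces x by x-1, B2 contains both and is unchanged. -/
lemma transfer_MB (hAx : x ∈ A) (hAx1 : x - 1 ∉ A) (hBx : x ∈ B) (hB1 : x - 1 ∈ B)
    (hΨ : IsLMset (insert (x - 1) (A \ {x})) B Ψ') :
    IsLMset A B (fun y => rh x (Ψ' (tw x y))) := by
  have hΨ1 : Ψ' (x - 1) = x - 1 := lm_id hΨ (memA'.mpr (Or.inl rfl)) hB1
  have hnex : ∀ w ∈ B, Ψ' w ≠ x := by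
    intro w hw
    rcases memA'.mp (lm_memA hΨ hw) with h | h
    · omega
    · exact h.2
  have hΨx : Ψ' x ≤ x - 2 := by
    have h1 : Ψ' x ≤ x := lm_le hΨ hBx
    have h2 : Ψ' x ≠ x := hnex x hBx
    have h3 : Ψ' x ≠ x - 1 := fun h => lm_ne hΨ hBx hB1 (by omega) (by rw [hΨ1, h])
    omega
  intro y hy
  by_cases hyx : y = x
  · -- y = x
    have hval : rh x (Ψ' (tw x y)) = x := by rw [hyx]; simp [tw, rh, hΨ1]
    constructor
    · refine ⟨?_, ?_, ?_⟩
      · show rh x (Ψ' (tw x y)) ∈ A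
        rw [hval]; exact hAx
      · show rh x (Ψ' (tw x y)) ≤ y
        rw [hval]; omega
      · intro y' hy'B hlt'
        show rh x (Ψ' (tw x y')) ≠ rh x (Ψ' (tw x y))
        rw [hval]
        by_cases hc : y' = x - 1
        · rw [hc]
          have : tw x (x - 1) = x := by simp [tw]
          rw [this, rh_ne x _ (by omega)]
          omega
        · have hy'2 : y' ≤ x - 2 := by omega
          have hv'' : Ψ' y' ≤ y' := lm_le hΨ hy'B
          rw [tw_ne x y' (by omega) hc, rh_ne x _ (by omega)]
          omega
    · intro z hz
      show z ≤ rh x (Ψ' (tw x y))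
      rw [hval]
      have := hz.2.1
      omega
  by_cases hyx1 : y = x - 1
  · -- y = x - 1
    have hval : rh x (Ψ' (tw x y)) = Ψ' x := by
      rw [hyx1]
      have h1 : tw x (x - 1) = x := by simp [tw]
      rw [h1, rh_ne x _ (by omega)]
    have hGr := hΨ x hBx
    constructor
    · refine ⟨?_, ?_, ?_⟩
      · show rh x (Ψ' (tw x y)) ∈ A
        rw [hval]
        rcases memA'.mp (lm_memA hΨ hBx) with h | h
        · omega
        · exact h.1
      · show rh x (Ψ' (tw x y)) ≤ y
        rw [hval]; omega
      · intro y' hy'B hlt'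
        show rh x (Ψ' (tw x y')) ≠ rh x (Ψ' (tw x y))
        rw [hval]
        have hy'2 : y' ≤ x - 2 := by omega
        have hv'' : Ψ' y' ≤ y' := lm_le hΨ hy'B
        rw [tw_ne x y' (by omega) (by omega), rh_ne x _ (by omega)]
        exact lm_ne hΨ hBx hy'B (by omega)
    · intro z hz
      obtain ⟨hzA, hzy, hzex⟩ := hz
      show z ≤ rh x (Ψ' (tw x y))
      rw [hval]
      have hzx1 : z ≠ x - 1 := fun h => hAx1 (h ▸ hzA)
      have hz2 : z ≤ x - 2 := by omega
      refine hGr.2 ⟨memA'.mpr (Or.inr ⟨hzA, by omega⟩), by omega, ?_⟩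
      intro w hwB hwlt
      by_cases hc : w = x - 1
      · rw [hc, hΨ1]; omega
      · have hw2 : w ≤ x - 2 := by omega
        have h5 : rh x (Ψ' (tw x w)) ≠ z := hzex w hwB (by omega)
        have hv'' : Ψ' w ≤ w := lm_le hΨ hwB
        rwa [tw_ne x w (by omega) hc, rh_ne x _ (by omega)] at h5
  rcases lt_trichotomy y x with hlt | heq | hgt
  · -- y ≤ x - 2
    have hy2 : y ≤ x - 2 := by omega
    have hv' : Ψ' y ≤ y := lm_le hΨ hy
    have hval : rh x (Ψ' (tw x y)) = Ψ' y := by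
      rw [tw_ne x y hyx hyx1, rh_ne x _ (by omega)]
    have hGr := hΨ y hy
    constructor
    · refine ⟨?_, ?_, ?_⟩
      · show rh x (Ψ' (tw x y)) ∈ A
        rw [hval]
        rcases memA'.mp (lm_memA hΨ hy) with h | h
        · omega
        · exact h.1
      · show rh x (Ψ' (tw x y)) ≤ y
        rw [hval]; exact hv'
      · intro y' hy'B hlt'
        show rh x (Ψ' (tw x y')) ≠ rh x (Ψ' (tw x y))
        rw [hval]
        have hy'2 : y' ≤ x - 3 := by omega
        have hv'' : Ψ' y' ≤ y' := lm_le hΨ hy'B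
        rw [tw_ne x y' (by omega) (by omega), rh_ne x _ (by omega)]
        exact lm_ne hΨ hy hy'B hlt'
    · intro z hz
      obtain ⟨hzA, hzy, hzex⟩ := hz
      show z ≤ rh x (Ψ' (tw x y))
      rw [hval]
      have hzx1 : z ≠ x - 1 := fun h => hAx1 (h ▸ hzA)
      refine hGr.2 ⟨memA'.mpr (Or.inr ⟨hzA, by omega⟩), hzy, ?_⟩
      intro w hwB hwlt
      have hw2 : w ≤ x - 3 := by omega
      have h5 : rh x (Ψ' (tw x w)) ≠ z := hzex w hwB hwlt
      have hv'' : Ψ' w ≤ w := lm_le hΨ hwB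
      rwa [tw_ne x w (by omega) (by omega), rh_ne x _ (by omega)] at h5
  · omega
  · -- y > x
    have hval : rh x (Ψ' (tw x y)) = rh x (Ψ' y) := by rw [tw_ne x y hyx hyx1]
    constructor
    · refine ⟨?_, ?_, ?_⟩
      · show rh x (Ψ' (tw x y)) ∈ A
        rw [hval]
        rcases memA'.mp (lm_memA hΨ hy) with h | h
        · rw [h, rh, if_pos rfl]; exact hAx
        · rw [rh_ne x _ (fun hc => hAx1 (hc ▸ h.1))]; exact h.1
      · show rh x (Ψ' (tw x y)) ≤ y
        rw [hval]
        have h1 : Ψ' y ≤ y := lm_le hΨ hy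
        unfold rh; split_ifs <;> omega
      · intro y' hy'B hlt'
        show rh x (Ψ' (tw x y')) ≠ rh x (Ψ' (tw x y))
        rw [hval]
        have htwB : tw x y' ∈ B := by
          unfold tw; split_ifs
          · exact hB1
          · exact hBx
          · exact hy'B
        have htwlt : tw x y' < y := by unfold tw; split_ifs <;> omega
        intro hcon
        exact lm_ne hΨ hy htwB htwlt (rh_inj (hnex _ htwB) (hnex _ hy) hcon)
    · intro z hz
      obtain ⟨hzA, hzy, hzex⟩ := hz
      show z ≤ rh x (Ψ' (tw x y))
      rw [hval]
      have hznex : z ≠ x := by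
        have h5 : rh x (Ψ' (tw x x)) ≠ z := hzex x hBx hgt
        have hvx : rh x (Ψ' (tw x x)) = x := by simp [tw, rh, hΨ1]
        rw [hvx] at h5
        exact fun h => h5 h.symm
      have hzx1 : z ≠ x - 1 := fun h => hAx1 (h ▸ hzA)
      have hGr := hΨ y hy
      have hzS' : z ≤ Ψ' y := by
        refine hGr.2 ⟨memA'.mpr (Or.inr ⟨hzA, hznex⟩), hzy, ?_⟩
        intro w hwB hwlt
        by_cases hc1 : w = x - 1
        · rw [hc1, hΨ1]; omega
        by_cases hc2 : w = x
        · have h5 : rh x (Ψ' (tw x (x - 1))) ≠ z := hzex (x - 1) hB1 (by omega)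
          have h6 : tw x (x - 1) = x := by simp [tw]
          rw [h6, rh_ne x _ (by omega)] at h5
          rw [hc2]; exact h5
        · have h5 : rh x (Ψ' (tw x w)) ≠ z := hzex w hwB hwlt
          rw [tw_ne x w hc2 hc1] at h5
          by_cases hc : Ψ' w = x - 1
          · rw [hc]; omega
          · rwa [rh_ne x _ hc] at h5
      exact le_trans hzS' (rh_ge x _)

/-- Transfer (B,M) : B1 contains both and is unchanged, B2 replaces x by x-1. -/
lemma transfer_BM (hAx : x ∈ A) (hA1 : x - 1 ∈ A) (hBx : x ∈ B) (hBx1 : x - 1 ∉ B)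
    (hΨ : IsLMset A (insert (x - 1) (B \ {x})) Ψ') :
    IsLMset A B (fun y => tw x (Ψ' (sg x y))) := by
  have hΨ1 : Ψ' (x - 1) = x - 1 := lm_id hΨ hA1 (memA'.mpr (Or.inl rfl))
  intro y hy
  have hyx1 : y ≠ x - 1 := fun h => hBx1 (h ▸ hy)
  rcases lt_trichotomy y x with hlt | heq | hgt
  · -- y ≤ x - 2
    have hy2 : y ≤ x - 2 := by omega
    have hyB' : y ∈ insert (x - 1) (B \ {x}) := memA'.mpr (Or.inr ⟨hy, by omega⟩)
    have hv' : Ψ' y ≤ y := lm_le hΨ hyB'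
    have hval : tw x (Ψ' (sg x y)) = Ψ' y := by
      rw [sg_ne x y (by omega), tw_ne x _ (by omega) (by omega)]
    have hGr := hΨ y hyB'
    constructor
    · refine ⟨?_, ?_, ?_⟩
      · show tw x (Ψ' (sg x y)) ∈ A
        rw [hval]; exact lm_memA hΨ hyB'
      · show tw x (Ψ' (sg x y)) ≤ y
        rw [hval]; exact hv'
      · intro y' hy'B hlt'
        show tw x (Ψ' (sg x y')) ≠ tw x (Ψ' (sg x y))
        rw [hval]
        have hy'2 : y' ≤ x - 3 := by omega
        have hy'B' : y' ∈ insert (x - 1) (B \ {x}) := memA'.mpr (Or.inr ⟨hy'B, by omega⟩)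
        have hv'' : Ψ' y' ≤ y' := lm_le hΨ hy'B'
        rw [sg_ne x y' (by omega), tw_ne x _ (by omega) (by omega)]
        exact lm_ne hΨ hyB' hy'B' hlt'
    · intro z hz
      obtain ⟨hzA, hzy, hzex⟩ := hz
      show z ≤ tw x (Ψ' (sg x y))
      rw [hval]
      refine hGr.2 ⟨hzA, hzy, ?_⟩
      intro w hwB' hwlt
      have hwx1 : w ≠ x - 1 := by omega
      rcases memA'.mp hwB' with h | h
      · omega
      · have h5 : tw x (Ψ' (sg x w)) ≠ z := hzex w h.1 hwlt
        have hw2 : w ≤ x - 3 := by omega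
        have hv'' : Ψ' w ≤ w := lm_le hΨ hwB'
        rwa [sg_ne x w h.2, tw_ne x _ (by omega) (by omega)] at h5
  · -- y = x
    have hval : tw x (Ψ' (sg x y)) = x := by
      rw [heq]; simp [sg, tw, hΨ1]
    constructor
    · refine ⟨?_, ?_, ?_⟩
      · show tw x (Ψ' (sg x y)) ∈ A
        rw [hval]; exact hAx
      · show tw x (Ψ' (sg x y)) ≤ y
        rw [hval]; omega
      · intro y' hy'B hlt'
        show tw x (Ψ' (sg x y')) ≠ tw x (Ψ' (sg x y))
        rw [hval]
        have hy'x1 : y' ≠ x - 1 := fun h => hBx1 (h ▸ hy'B)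
        have hy'2 : y' ≤ x - 2 := by omega
        have hy'B' : y' ∈ insert (x - 1) (B \ {x}) := memA'.mpr (Or.inr ⟨hy'B, by omega⟩)
        have hv'' : Ψ' y' ≤ y' := lm_le hΨ hy'B'
        rw [sg_ne x y' (by omega), tw_ne x _ (by omega) (by omega)]
        omega
    · intro z hz
      show z ≤ tw x (Ψ' (sg x y))
      rw [hval]
      have := hz.2.1
      omega
  · -- y > x
    have hyB' : y ∈ insert (x - 1) (B \ {x}) := memA'.mpr (Or.inr ⟨hy, by omega⟩)
    have hval : tw x (Ψ' (sg x y)) = tw x (Ψ' y) := by rw [sg_ne x y (by omega)]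
    have hGr := hΨ y hyB'
    constructor
    · refine ⟨?_, ?_, ?_⟩
      · show tw x (Ψ' (sg x y)) ∈ A
        rw [hval]
        have h1 := lm_memA hΨ hyB'
        unfold tw; split_ifs
        · exact hA1
        · exact hAx
        · exact h1
      · show tw x (Ψ' (sg x y)) ≤ y
        rw [hval]
        exact tw_le (by omega) (lm_le hΨ hyB')
      · intro y' hy'B hlt'
        show tw x (Ψ' (sg x y')) ≠ tw x (Ψ' (sg x y))
        rw [hval]
        have hsgB' : sg x y' ∈ insert (x - 1) (B \ {x}) := by
          by_cases hc : y' = x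
          · rw [hc, sg, if_pos rfl]; exact memA'.mpr (Or.inl rfl)
          · rw [sg_ne x y' hc]; exact memA'.mpr (Or.inr ⟨hy'B, hc⟩)
        have hsglt : sg x y' < y := lt_of_le_of_lt (sg_le x y') hlt'
        intro hcon
        exact lm_ne hΨ hyB' hsgB' hsglt (tw_inj hcon)
    · intro z hz
      obtain ⟨hzA, hzy, hzex⟩ := hz
      show z ≤ tw x (Ψ' (sg x y))
      rw [hval]
      have hznex : z ≠ x := by
        have h5 : tw x (Ψ' (sg x x)) ≠ z := hzex x hBx hgt
        have hvx : tw x (Ψ' (sg x x)) = x := by simp [sg, tw, hΨ1]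
        rw [hvx] at h5
        exact fun h => h5 h.symm
      have htwz : tw x z ≤ Ψ' y := by
        refine hGr.2 ⟨?_, ?_, ?_⟩
        · unfold tw; split_ifs
          · exact hA1
          · exact hAx
          · exact hzA
        · exact tw_le (by omega) hzy
        · intro w hwB' hwlt
          rcases memA'.mp hwB' with h | h
          · rw [h, hΨ1]
            intro hcon
            exact hznex (tw_inj (x := x) (by rw [← hcon]; simp [tw]))
          · have h5 : tw x (Ψ' (sg x w)) ≠ z := hzex w h.1 hwlt
            rw [sg_ne x w h.2] at h5
            intro hcon
            apply h5
            rw [hcon, tw_tw]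
      exact tw_le_rev hznex htwz

/-- Transfer when B2 is entirely below x - 2 : the same map works. -/
lemma transfer_N (hB : ∀ y ∈ B, y ≤ x - 2)
    (hΨ : IsLMset (insert (x - 1) (A \ {x})) B Ψ') :
    IsLMset A B Ψ' := by
  intro y hy
  have hy2 := hB y hy
  have hGr := hΨ y hy
  have hv' : Ψ' y ≤ y := lm_le hΨ hy
  constructor
  · refine ⟨?_, hGr.1.2.1, hGr.1.2.2⟩
    rcases memA'.mp (lm_memA hΨ hy) with h | h
    · omega
    · exact h.1
  · intro z hz
    obtain ⟨hzA, hzy, hzex⟩ := hz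
    have hzx1 : z ≤ x - 2 := by omega
    exact hGr.2 ⟨memA'.mpr (Or.inr ⟨hzA, by omega⟩), hzy, hzex⟩

end Transfer2



section HeartHelpers

variable {x : ℤ} {A B : Set ℤ} {Ψ : ℤ → ℤ}

lemma sg_rh {x w : ℤ} (h : w ≠ x) : sg x (rh x w) = w := by
  unfold sg rh; split_ifs <;> omega

lemma lm_ne_x (h : IsLMset (insert (x - 1) (A \ {x})) B Ψ) {y : ℤ} (hy : y ∈ B) :
    Ψ y ≠ x := by
  rcases memA'.mp (lm_memA h hy) with h1 | h1
  · omega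
  · exact h1.2

lemma point_M {x x₀ : ℤ} {B : Set ℤ} (hBx : x ∈ B) (hBx1 : x - 1 ∉ B)
    (hx₀ : x₀ ∈ insert (x - 1) (B \ {x})) : rh x x₀ ∈ B ∧ sg x (rh x x₀) = x₀ := by
  rcases memA'.mp hx₀ with h | h
  · rw [h]
    refine ⟨?_, ?_⟩
    · simp only [rh, if_pos rfl]; exact hBx
    · simp [rh, sg]
  · have hne : x₀ ≠ x - 1 := fun hh => hBx1 (hh ▸ h.1)
    rw [rh_ne x _ hne, sg_ne x _ h.2]
    exact ⟨h.1, rfl⟩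

lemma mem_tw {x y : ℤ} {B : Set ℤ} (hBx : x ∈ B) (hB1 : x - 1 ∈ B) (hy : y ∈ B) :
    tw x y ∈ B := by
  unfold tw; split_ifs
  · exact hB1
  · exact hBx
  · exact hy

end HeartHelpers

/-! ### Section 8 : row sizes -/

lemma rowSize_eq_sum {s : ℤ} {β : ℤ → ℤ} (N : ℤ) (hN : ∀ j ≤ N, β j = j) (K : ℕ)
    (hK : (s - N).toNat ≤ K) :
    rowSize s β = ∑ k ∈ Finset.range K, (β (s - k) - (s - k)).toNat := by
  apply tsum_eq_sum
  intro k hk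
  rw [Finset.mem_range] at hk
  push_neg at hk
  have h1 : s - k ≤ N := by omega
  rw [hN _ h1]
  simp

end HP

/-- Replacing `x` by `x−1` in the rows `i` with `1 ≤ i < d'` or `d < i ≤ c` of a
standard (♥)-symbol (in the situation where some row contains both `x` and `x−1`)
yields again a standard symbol satisfying (♥), of strictly smaller size. -/
theorem heart_preserved_replacement
    (l : ℕ) (hl : 1 ≤ l) (v : ℕ → ℤ)
    (hv : ∀ i, 1 ≤ i → i < l → v (i + 1) ≤ v i)
    (β : ℕ → ℤ → ℤ) (hrows : ∀ i, 1 ≤ i → i ≤ l → RowOK (v i) (β i))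
    (hstd : Standard l v β) (hheart : Heart l v β)
    (c : ℕ) (hc1 : 1 ≤ c) (hcl : c ≤ l)
    (hbelow : ∀ i, c < i → i ≤ l → ∀ j : ℤ, j ≤ v i → β i j = j)
    (x : ℤ) (hxc : x ∈ Row v β c) (hx1c : (x - 1) ∉ Row v β c)
    (hxmin : ∀ y : ℤ, y ∈ Row v β c → (y - 1) ∉ Row v β c → x ≤ y)
    (c' : ℕ) (hc' : 1 ≤ c' ∧ c' ≤ l ∧ x ∈ Row v β c' ∧
      ∀ i, 1 ≤ i → i < c' → x ∉ Row v β i)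
    (hboth : ∃ i, 1 ≤ i ∧ i ≤ l ∧ x ∈ Row v β i ∧ (x - 1) ∈ Row v β i)
    (d : ℕ) (hd : 1 ≤ d ∧ d ≤ l ∧ (x - 1) ∈ Row v β d ∧
      ∀ i, d < i → i ≤ l → (x - 1) ∉ Row v β i)
    (d' : ℕ) (hd' : 1 ≤ d' ∧ d' ≤ l ∧ (x - 1) ∈ Row v β d' ∧
      ∀ i, 1 ≤ i → i < d' → (x - 1) ∉ Row v β i)
    (β' : ℕ → ℤ → ℤ)
    (hβ' : β' = fun i j =>
      if ((1 ≤ i ∧ i < d') ∨ (d < i ∧ i ≤ c)) ∧ β i j = x then x - 1 else β i j) :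
    (∀ i, 1 ≤ i → i ≤ l → RowOK (v i) (β' i)) ∧ Standard l v β' ∧ Heart l v β' ∧
      symSize l v β' < symSize l v β := by
  classical
  open HP in
  subst hβ'
  obtain ⟨hd1, hdl, hx1d, hd4⟩ := hd
  obtain ⟨hd'1, hd'l, hx1d', hd'4⟩ := hd'
  have hd'd : d' ≤ d := by
    by_contra h
    exact hd4 d' (by omega) hd'l hx1d'
  have hdc : d < c := HP.d_lt_c hv hrows hstd hc1 hcl hbelow hx1c hd1 hdl hx1d
  have habove := HP.rows_above hrows hcl hbelow hdc hd4
  obtain ⟨j0, hj0v, hj0x, hxj0, hidc, hsmallc⟩ :=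
    HP.rowc_struct hrows hc1 hcl hxc hx1c hxmin
  have hIdAll : ∀ a, 1 ≤ a → a ≤ c → ∀ j ≤ j0 - 1, β a j = j := by
    intro a ha1 ha2 j hj
    have h1 : β a j ≤ β c j := HP.std_chain hv hstd a c ha1 ha2 hcl j (by omega)
    have h2 := HP.rowOK_ge (hrows a ha1 (by omega)) j
      (le_trans (by omega : j ≤ v c) (HP.v_anti hv a c ha1 ha2 hcl))
    rw [hidc j hj] at h1
    omega
  obtain ⟨e, he1, hel, hxe, hx1e⟩ := hboth
  have hed : e ≤ d := by
    by_contra h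
    exact hd4 e (by omega) hel hx1e
  have hec : e < c := by omega
  have hXall := HP.x_all hv hrows hstd hheart hc1 hcl hxc he1 hec hxe hx1e hj0v hj0x hxj0
    hIdAll hsmallc
  have hX1 := HP.x1_interval hv hrows hstd hheart hd'1 hdl hx1d hx1d'
  set P : ℕ → Prop := fun a => (1 ≤ a ∧ a < d') ∨ (d < a ∧ a ≤ c) with hP
  have hx1R : ∀ a : ℕ, P a → (x - 1) ∉ Row v β a := by
    intro a ha
    rcases ha with ⟨h1, h2⟩ | ⟨h1, h2⟩
    · exact hd'4 a h1 h2
    · exact hd4 a h1 (by omega)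
  have hPc : P c := Or.inr ⟨hdc, le_rfl⟩
  have hPle : ∀ a, P a → 1 ≤ a ∧ a ≤ c := by
    intro a ha
    rcases ha with ⟨h1, h2⟩ | ⟨h1, h2⟩
    · exact ⟨h1, by omega⟩
    · exact ⟨by omega, h2⟩
  have hβ'P : ∀ a (j : ℤ), P a → β a j = x → (fun i j =>
      if ((1 ≤ i ∧ i < d') ∨ (d < i ∧ i ≤ c)) ∧ β i j = x then x - 1 else β i j) a j = x - 1 := by
    intro a j ha hj
    simp only []
    rw [if_pos ⟨ha, hj⟩]
  have hβ'ne : ∀ a (j : ℤ), ¬ (P a ∧ β a j = x) → (fun i j =>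
      if ((1 ≤ i ∧ i < d') ∨ (d < i ∧ i ≤ c)) ∧ β i j = x then x - 1 else β i j) a j = β a j := by
    intro a j ha
    simp only []
    rw [if_neg ha]
  -- Part 1 : RowOK
  have hRowOK' : ∀ i, 1 ≤ i → i ≤ l → RowOK (v i)
      ((fun i j => if ((1 ≤ i ∧ i < d') ∨ (d < i ∧ i ≤ c)) ∧ β i j = x then x - 1
        else β i j) i) := by
    intro a ha1 hal
    have hOKa := hrows a ha1 hal
    by_cases hPa : P a
    · have hx1a : (x - 1) ∉ Row v β a := hx1R a hPa
      constructor
      · intro j hj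
        have hlt := hOKa.1 j hj
        by_cases hc1 : β a j = x
        · have hv1 := hβ'P a j hPa hc1
          have hc0 : ¬ (P a ∧ β a (j - 1) = x) := by
            intro h
            omega
          have hv0 := hβ'ne a (j - 1) hc0
          have hne : β a (j - 1) ≠ x - 1 := fun h => hx1a ⟨j - 1, by omega, h⟩
          rw [hv1, hv0]
          omega
        · have hv1 := hβ'ne a j (fun h => hc1 h.2)
          by_cases hc0 : β a (j - 1) = x
          · have hv0 := hβ'P a (j - 1) hPa hc0
            rw [hv1, hv0]
            omega
          · have hv0 := hβ'ne a (j - 1) (fun h => hc0 h.2)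
            rw [hv1, hv0]
            omega
      · obtain ⟨N, hN⟩ := hOKa.2
        refine ⟨min N (x - 1), fun j hj => ?_⟩
        have h1 : β a j = j := hN j (by omega)
        have h2 : ¬ (P a ∧ β a j = x) := by
          intro h
          omega
        rw [hβ'ne a j h2, h1]
    · have heq : ∀ j : ℤ, (fun i j => if ((1 ≤ i ∧ i < d') ∨ (d < i ∧ i ≤ c)) ∧ β i j = x
          then x - 1 else β i j) a j = β a j := fun j => hβ'ne a j (fun h => hPa h.1)
      constructor
      · intro j hj
        rw [heq, heq]
        exact hOKa.1 j hj
      · obtain ⟨N, hN⟩ := hOKa.2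
        exact ⟨N, fun j hj => by rw [heq]; exact hN j hj⟩
  -- Part 2 : Standard
  have hStd' : Standard l v (fun i j => if ((1 ≤ i ∧ i < d') ∨ (d < i ∧ i ≤ c)) ∧ β i j = x
      then x - 1 else β i j) := by
    intro a ha1 hal j hj
    have hstdj := hstd a ha1 hal j hj
    by_cases hc1 : P (a + 1) ∧ β (a + 1) j = x
    · have hv1 := hβ'P (a + 1) j hc1.1 hc1.2
      by_cases hc0 : β a j = x
      · by_cases hPa : P a
        · have hv0 := hβ'P a j hPa hc0
          simp only [] at hv0 hv1 ⊢
          omega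
        · exfalso
          have had : a = d := by
            rcases hc1.1 with ⟨h1, h2⟩ | ⟨h1, h2⟩
            · exact absurd (Or.inl ⟨ha1, by omega⟩) hPa
            · by_contra hne
              exact hPa (Or.inr ⟨by omega, by omega⟩)
          have hX1a : (x - 1) ∈ Row v β a := by
            rw [had]; exact hX1 d hd'd le_rfl
          obtain ⟨j', hj'v, hj'⟩ := hX1a
          have hOKa := hrows a ha1 (by omega)
          have hOKa1 := hrows (a + 1) (by omega) (by omega)
          have hjva : j ≤ v a := le_trans hj (hv a ha1 (by omega))
          have hj'j : j' < j := by
            by_contra h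
            push_neg at h
            have h2 : β a j ≤ β a j' := by
              rcases eq_or_lt_of_le h with h' | h'
              · rw [h']
              · exact le_of_lt (HP.rowOK_mono hOKa j j' h' hj'v)
            omega
          have hb1 : β a (j - 1) = x - 1 := by
            have hle : β a j' ≤ β a (j - 1) := by
              rcases eq_or_lt_of_le (show j' ≤ j - 1 by omega) with h' | h'
              · rw [h']
              · exact le_of_lt (HP.rowOK_mono hOKa j' (j - 1) h' (by omega))
            have hlt2 : β a (j - 1) < β a j := hOKa.1 j hjva
            omega
          have hs1 : β a (j - 1) ≤ β (a + 1) (j - 1) := hstd a ha1 hal (j - 1) (by omega)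
          have hlt3 : β (a + 1) (j - 1) < β (a + 1) j := hOKa1.1 j hj
          have hx1a1 : β (a + 1) (j - 1) = x - 1 := by omega
          exact hd4 (a + 1) (by omega) (by omega) ⟨j - 1, by omega, hx1a1⟩
      · have hv0 := hβ'ne a j (fun h => hc0 h.2)
        simp only [] at hv0 hv1 ⊢
        omega
    · have hv1 := hβ'ne (a + 1) j hc1
      by_cases hc0 : P a ∧ β a j = x
      · have hv0 := hβ'P a j hc0.1 hc0.2
        simp only [] at hv0 hv1 ⊢
        omega
      · have hv0 := hβ'ne a j hc0
        simp only [] at hv0 hv1 ⊢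
        omega
  refine ⟨hRowOK', hStd', ?_, ?_⟩
  · -- Part 3 : Heart
    have hRowM : ∀ a, P a → Row v (fun i j => if ((1 ≤ i ∧ i < d') ∨ (d < i ∧ i ≤ c)) ∧ β i j = x then x - 1 else β i j) a
        = insert (x - 1) (Row v β a \ {x}) := by
      intro a hPa
      obtain ⟨ha1, hac⟩ := hPle a hPa
      obtain ⟨ja, hjav, hja⟩ := hXall a ha1 hac
      ext y
      simp only [Row, Set.mem_setOf_eq, Set.mem_insert_iff, Set.mem_diff,
        Set.mem_singleton_iff]
      constructor
      · rintro ⟨jj, hjj1, hjj2⟩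
        by_cases hcx : β a jj = x
        · left
          rw [← hjj2]
          exact hβ'P a jj hPa hcx
        · right
          have heq := hβ'ne a jj (fun h => hcx h.2)
          simp only [] at heq
          rw [heq] at hjj2
          exact ⟨⟨jj, hjj1, hjj2⟩, fun h => hcx (by rw [hjj2, h])⟩
      · rintro (rfl | ⟨⟨jj, hjj1, hjj2⟩, hne⟩)
        · exact ⟨ja, hjav, hβ'P a ja hPa hja⟩
        · refine ⟨jj, hjj1, ?_⟩
          have heq := hβ'ne a jj (fun h => hne (by rw [← hjj2]; exact h.2))
          simp only [] at heq
          rw [heq]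
          exact hjj2
    have hRowU : ∀ a, ¬ P a → Row v (fun i j => if ((1 ≤ i ∧ i < d') ∨ (d < i ∧ i ≤ c)) ∧ β i j = x then x - 1 else β i j) a = Row v β a := by
      intro a hPa
      ext y
      simp only [Row, Set.mem_setOf_eq]
      constructor <;> rintro ⟨jj, hjj1, hjj2⟩ <;> refine ⟨jj, hjj1, ?_⟩
      · rw [← hjj2]
        exact (hβ'ne a jj (fun h => hPa h.1)).symm
      · have heq := hβ'ne a jj (fun h => hPa h.1)
        simp only [] at heq
        rw [heq]
        exact hjj2
    have hnPB : ∀ a, d' ≤ a → a ≤ d → ¬ P a := by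
      intro a h1 h2 h
      rcases h with ⟨_, h3⟩ | ⟨h3, _⟩ <;> omega
    have hnPN : ∀ a, c < a → ¬ P a := by
      intro a h1 h
      rcases h with ⟨_, h3⟩ | ⟨h3, _⟩ <;> omega
    have hclass : ∀ a, 1 ≤ a → a ≤ l → P a ∨ (d' ≤ a ∧ a ≤ d) ∨ (c < a ∧ a ≤ l) := by
      intro a h1 h2
      by_cases hPa : P a
      · exact Or.inl hPa
      · have hPa' : ¬ ((1 ≤ a ∧ a < d') ∨ (d < a ∧ a ≤ c)) := hPa
        right
        omega
    intro i j k hi1 hij hjk hkl ψki ψji ψkj hki hji hkj x₀ hx₀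
    have hjl : j ≤ l := by omega
    have hil : i ≤ l := by omega
    have hj1 : 1 ≤ j := by omega
    have hk1 : 1 ≤ k := by omega
    rcases hclass k hk1 hkl with hPk | hBk | hNk
    · -- k is a modified row
      have hkc := hPle k hPk
      have hxk := hXall k hkc.1 hkc.2
      have hmk := hx1R k hPk
      rw [hRowM k hPk] at hki hkj hx₀
      obtain ⟨hy₀1, hy₀2⟩ := HP.point_M hxk hmk hx₀
      rcases hclass i hi1 hil with hPi | hBi | hNi
      · have hic := hPle i hPi
        have hxi := hXall i hic.1 hic.2
        have hmi := hx1R i hPi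
        rw [hRowM i hPi] at hki hji
        rcases hclass j hj1 hjl with hPj | hBj | hNj
        · -- M M M
          have hjc := hPle j hPj
          have hxj := hXall j hjc.1 hjc.2
          have hmj := hx1R j hPj
          rw [hRowM j hPj] at hji hkj
          have tki := HP.transfer_MM hxi hmi hxk hmk hki
          have tji := HP.transfer_MM hxi hmi hxj hmj hji
          have tkj := HP.transfer_MM hxj hmj hxk hmk hkj
          have hcomp : HP.rh x (ψki (HP.sg x (HP.rh x x₀))) =
              HP.rh x (ψji (HP.sg x (HP.rh x (ψkj (HP.sg x (HP.rh x x₀)))))) :=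
            hheart i j k hi1 hij hjk hkl _ _ _ tki tji tkj (HP.rh x x₀) hy₀1
          rw [hy₀2] at hcomp
          have hwx : ψkj x₀ ≠ x := HP.lm_ne_x hkj hx₀
          rw [HP.sg_rh hwx] at hcomp
          exact HP.rh_inj (HP.lm_ne_x hki hx₀) (HP.lm_ne_x hji (HP.lm_memA hkj hx₀)) hcomp
        · -- M B M
          have hxj := hXall j (by omega) (by omega)
          have hbj := hX1 j hBj.1 hBj.2
          rw [hRowU j (hnPB j hBj.1 hBj.2)] at hji hkj
          have tki := HP.transfer_MM hxi hmi hxk hmk hki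
          have tji := HP.transfer_MB hxi hmi hxj hbj hji
          have tkj := HP.transfer_BM hxj hbj hxk hmk hkj
          have hcomp : HP.rh x (ψki (HP.sg x (HP.rh x x₀))) =
              HP.rh x (ψji (HP.tw x (HP.tw x (ψkj (HP.sg x (HP.rh x x₀)))))) :=
            hheart i j k hi1 hij hjk hkl _ _ _ tki tji tkj (HP.rh x x₀) hy₀1
          rw [hy₀2, HP.tw_tw] at hcomp
          exact HP.rh_inj (HP.lm_ne_x hki hx₀) (HP.lm_ne_x hji (HP.lm_memA hkj hx₀)) hcomp
        · exfalso
          have := hkc.2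
          omega
      · have hxi := hXall i (by omega) (by omega)
        have hbi := hX1 i hBi.1 hBi.2
        rw [hRowU i (hnPB i hBi.1 hBi.2)] at hki hji
        rcases hclass j hj1 hjl with hPj | hBj | hNj
        · -- B M M
          have hjc := hPle j hPj
          have hxj := hXall j hjc.1 hjc.2
          have hmj := hx1R j hPj
          rw [hRowM j hPj] at hji hkj
          have tki := HP.transfer_BM hxi hbi hxk hmk hki
          have tji := HP.transfer_BM hxi hbi hxj hmj hji
          have tkj := HP.transfer_MM hxj hmj hxk hmk hkj
          have hcomp : HP.tw x (ψki (HP.sg x (HP.rh x x₀))) =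
              HP.tw x (ψji (HP.sg x (HP.rh x (ψkj (HP.sg x (HP.rh x x₀)))))) :=
            hheart i j k hi1 hij hjk hkl _ _ _ tki tji tkj (HP.rh x x₀) hy₀1
          rw [hy₀2] at hcomp
          have hwx : ψkj x₀ ≠ x := HP.lm_ne_x hkj hx₀
          rw [HP.sg_rh hwx] at hcomp
          exact HP.tw_inj hcomp
        · -- B B M
          have hxj := hXall j (by omega) (by omega)
          have hbj := hX1 j hBj.1 hBj.2
          rw [hRowU j (hnPB j hBj.1 hBj.2)] at hji hkj
          have tki := HP.transfer_BM hxi hbi hxk hmk hki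
          have tkj := HP.transfer_BM hxj hbj hxk hmk hkj
          have hcomp : HP.tw x (ψki (HP.sg x (HP.rh x x₀))) =
              ψji (HP.tw x (ψkj (HP.sg x (HP.rh x x₀)))) :=
            hheart i j k hi1 hij hjk hkl _ _ _ tki hji tkj (HP.rh x x₀) hy₀1
          rw [hy₀2] at hcomp
          have hwj : ψkj x₀ ∈ Row v β j := HP.lm_memA hkj hx₀
          rw [HP.lm_tw hji hxi hbi hxj hbj hwj] at hcomp
          exact HP.tw_inj hcomp
        · exfalso
          have := hkc.2
          omega
      · exfalso
        have := hkc.2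
        omega
    · -- k is a "both" row
      have hxk := hXall k (by omega) (by omega)
      have hbk := hX1 k hBk.1 hBk.2
      rw [hRowU k (hnPB k hBk.1 hBk.2)] at hki hkj hx₀
      have hy₀1 : HP.tw x x₀ ∈ Row v β k := HP.mem_tw hxk hbk hx₀
      rcases hclass i hi1 hil with hPi | hBi | hNi
      · have hic := hPle i hPi
        have hxi := hXall i hic.1 hic.2
        have hmi := hx1R i hPi
        rw [hRowM i hPi] at hki hji
        rcases hclass j hj1 hjl with hPj | hBj | hNj
        · -- M M B
          have hjc := hPle j hPj
          have hxj := hXall j hjc.1 hjc.2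
          have hmj := hx1R j hPj
          rw [hRowM j hPj] at hji hkj
          have tki := HP.transfer_MB hxi hmi hxk hbk hki
          have tji := HP.transfer_MM hxi hmi hxj hmj hji
          have tkj := HP.transfer_MB hxj hmj hxk hbk hkj
          have hcomp : HP.rh x (ψki (HP.tw x (HP.tw x x₀))) =
              HP.rh x (ψji (HP.sg x (HP.rh x (ψkj (HP.tw x (HP.tw x x₀)))))) :=
            hheart i j k hi1 hij hjk hkl _ _ _ tki tji tkj (HP.tw x x₀) hy₀1
          rw [HP.tw_tw] at hcomp
          have hwx : ψkj x₀ ≠ x := HP.lm_ne_x hkj hx₀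
          rw [HP.sg_rh hwx] at hcomp
          exact HP.rh_inj (HP.lm_ne_x hki hx₀) (HP.lm_ne_x hji (HP.lm_memA hkj hx₀)) hcomp
        · -- M B B
          have hxj := hXall j (by omega) (by omega)
          have hbj := hX1 j hBj.1 hBj.2
          rw [hRowU j (hnPB j hBj.1 hBj.2)] at hji hkj
          have tki := HP.transfer_MB hxi hmi hxk hbk hki
          have tji := HP.transfer_MB hxi hmi hxj hbj hji
          have hcomp : HP.rh x (ψki (HP.tw x (HP.tw x x₀))) =
              HP.rh x (ψji (HP.tw x (ψkj (HP.tw x x₀)))) :=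
            hheart i j k hi1 hij hjk hkl _ _ _ tki tji hkj (HP.tw x x₀) hy₀1
          rw [HP.tw_tw] at hcomp
          rw [HP.lm_tw hkj hxj hbj hxk hbk hx₀, HP.tw_tw] at hcomp
          exact HP.rh_inj (HP.lm_ne_x hki hx₀) (HP.lm_ne_x hji (HP.lm_memA hkj hx₀)) hcomp
        · exfalso
          have h1 := hBk.2
          omega
      · have hxi := hXall i (by omega) (by omega)
        have hbi := hX1 i hBi.1 hBi.2
        rw [hRowU i (hnPB i hBi.1 hBi.2)] at hki hji
        rcases hclass j hj1 hjl with hPj | hBj | hNj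
        · -- B M B : impossible
          exfalso
          rcases hPj with ⟨_, h2⟩ | ⟨h2, _⟩
          · have := hBi.1
            omega
          · have := hBk.2
            omega
        · -- B B B
          rw [hRowU j (hnPB j hBj.1 hBj.2)] at hji hkj
          exact hheart i j k hi1 hij hjk hkl _ _ _ hki hji hkj x₀ hx₀
        · exfalso
          have := hBk.2
          omega
      · exfalso
        have := hBk.2
        omega
    · -- k is an empty row below
      rw [hRowU k (hnPN k hNk.1)] at hki hkj hx₀
      have hkbound : ∀ y ∈ Row v β k, y ≤ x - 2 := habove k hNk.1 hNk.2
      have hx₀2 : x₀ ≤ x - 2 := hkbound x₀ hx₀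
      have tki : IsLMset (Row v β i) (Row v β k) ψki := by
        rcases hclass i hi1 hil with hPi | hBi | hNi
        · rw [hRowM i hPi] at hki
          exact HP.transfer_N hkbound hki
        · rwa [hRowU i (hnPB i hBi.1 hBi.2)] at hki
        · rwa [hRowU i (hnPN i hNi.1)] at hki
      have tkj : IsLMset (Row v β j) (Row v β k) ψkj := by
        rcases hclass j hj1 hjl with hPj | hBj | hNj
        · rw [hRowM j hPj] at hkj
          exact HP.transfer_N hkbound hkj
        · rwa [hRowU j (hnPB j hBj.1 hBj.2)] at hkj
        · rwa [hRowU j (hnPN j hNj.1)] at hkj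
      have hw : ψkj x₀ ∈ Row v β j := HP.lm_memA tkj hx₀
      have hwle : ψkj x₀ ≤ x - 2 := le_trans (HP.lm_le tkj hx₀) hx₀2
      rcases hclass i hi1 hil with hPi | hBi | hNi
      · have hic := hPle i hPi
        have hxi := hXall i hic.1 hic.2
        have hmi := hx1R i hPi
        rw [hRowM i hPi] at hji
        rcases hclass j hj1 hjl with hPj | hBj | hNj
        · -- M M N
          have hjc := hPle j hPj
          have hxj := hXall j hjc.1 hjc.2
          have hmj := hx1R j hPj
          rw [hRowM j hPj] at hji
          have tji := HP.transfer_MM hxi hmi hxj hmj hji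
          have hcomp : ψki x₀ = HP.rh x (ψji (HP.sg x (ψkj x₀))) :=
            hheart i j k hi1 hij hjk hkl _ _ _ tki tji tkj x₀ hx₀
          rw [HP.sg_ne x _ (by omega)] at hcomp
          have hw' : ψkj x₀ ∈ insert (x - 1) (Row v β j \ {x}) :=
            HP.memA'.mpr (Or.inr ⟨hw, by omega⟩)
          have hle2 : ψji (ψkj x₀) ≤ ψkj x₀ := HP.lm_le hji hw'
          rw [HP.rh_ne x _ (by omega)] at hcomp
          exact hcomp
        · -- M B N
          have hxj := hXall j (by omega) (by omega)
          have hbj := hX1 j hBj.1 hBj.2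
          rw [hRowU j (hnPB j hBj.1 hBj.2)] at hji
          have tji := HP.transfer_MB hxi hmi hxj hbj hji
          have hcomp : ψki x₀ = HP.rh x (ψji (HP.tw x (ψkj x₀))) :=
            hheart i j k hi1 hij hjk hkl _ _ _ tki tji tkj x₀ hx₀
          rw [HP.tw_ne x _ (by omega) (by omega)] at hcomp
          have hle2 : ψji (ψkj x₀) ≤ ψkj x₀ := HP.lm_le hji hw
          rw [HP.rh_ne x _ (by omega)] at hcomp
          exact hcomp
        · -- M N N
          rw [hRowU j (hnPN j hNj.1)] at hji
          have tji := HP.transfer_N (habove j hNj.1 hjl) hji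
          exact hheart i j k hi1 hij hjk hkl _ _ _ tki tji tkj x₀ hx₀
      · have hxi := hXall i (by omega) (by omega)
        have hbi := hX1 i hBi.1 hBi.2
        rw [hRowU i (hnPB i hBi.1 hBi.2)] at hji
        rcases hclass j hj1 hjl with hPj | hBj | hNj
        · -- B M N
          have hjc := hPle j hPj
          have hxj := hXall j hjc.1 hjc.2
          have hmj := hx1R j hPj
          rw [hRowM j hPj] at hji
          have tji := HP.transfer_BM hxi hbi hxj hmj hji
          have hcomp : ψki x₀ = HP.tw x (ψji (HP.sg x (ψkj x₀))) :=
            hheart i j k hi1 hij hjk hkl _ _ _ tki tji tkj x₀ hx₀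
          rw [HP.sg_ne x _ (by omega)] at hcomp
          have hw' : ψkj x₀ ∈ insert (x - 1) (Row v β j \ {x}) :=
            HP.memA'.mpr (Or.inr ⟨hw, by omega⟩)
          have hle2 : ψji (ψkj x₀) ≤ ψkj x₀ := HP.lm_le hji hw'
          rw [HP.tw_ne x _ (by omega) (by omega)] at hcomp
          exact hcomp
        · -- B B N
          rw [hRowU j (hnPB j hBj.1 hBj.2)] at hji
          exact hheart i j k hi1 hij hjk hkl _ _ _ tki hji tkj x₀ hx₀
        · -- B N N
          rw [hRowU j (hnPN j hNj.1)] at hji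
          exact hheart i j k hi1 hij hjk hkl _ _ _ tki hji tkj x₀ hx₀
      · -- N N N
        have hNj : c < j := by omega
        rw [hRowU i (hnPN i hNi.1), hRowU j (hnPN j hNj)] at hji
        exact hheart i j k hi1 hij hjk hkl _ _ _ tki hji tkj x₀ hx₀

  · -- Part 4 : size decreases
    have hterm : ∀ a (j : ℤ), (fun i j => if ((1 ≤ i ∧ i < d') ∨ (d < i ∧ i ≤ c)) ∧ β i j = x
        then x - 1 else β i j) a j ≤ β a j := by
      intro a j
      simp only []
      split_ifs with h
      · omega
      · exact le_rfl
    unfold symSize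
    apply Finset.sum_lt_sum
    · intro a ha
      rw [Finset.mem_Icc] at ha
      obtain ⟨N, hN⟩ := (hrows a ha.1 ha.2).2
      obtain ⟨N', hN'⟩ := (hRowOK' a ha.1 ha.2).2
      set K := max (v a - N).toNat (v a - N').toNat with hK
      rw [rowSize_eq_sum N hN K (by omega), rowSize_eq_sum N' hN' K (by omega)]
      apply Finset.sum_le_sum
      intro k _
      have := hterm a (v a - k)
      omega
    · refine ⟨c, Finset.mem_Icc.mpr ⟨hc1, hcl⟩, ?_⟩
      obtain ⟨N, hN⟩ := (hrows c hc1 hcl).2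
      obtain ⟨N', hN'⟩ := (hRowOK' c hc1 hcl).2
      set k0 := (v c - j0).toNat with hk0
      set K := max (max (v c - N).toNat (v c - N').toNat) (k0 + 1) with hK
      rw [rowSize_eq_sum N hN K (by omega), rowSize_eq_sum N' hN' K (by omega)]
      apply Finset.sum_lt_sum
      · intro k _
        have := hterm c (v c - k)
        omega
      · refine ⟨k0, Finset.mem_range.mpr (by omega), ?_⟩
        have hj0' : v c - (k0 : ℤ) = j0 := by omega
        have h1 := hβ'P c j0 hPc hj0x
        simp only [] at h1 ⊢
        rw [hj0', h1, hj0x]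
        omega
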